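/- Tempering increases the effective sample size monotonically as γ decreases: for positive weights w*_1,…,w*_M and 0 < γ₁ ≤ γ₂ ≤ 1, the normalized weights obtained from exponents γ₁ majorize-dominate those from γ₂ in the sense that ∑_i (w̄_i^{(γ₁)})² ≤ ∑_i (w̄_i^{(γ₂)})², i.e., M_eff(γ₁) ≥ M_eff(γ₂). -/

import Mathlib

open Finset

/-- Weighted Chebyshev-type inequality: `(∑ g²)(∑ g h) ≤ (∑ g)(∑ g² h)`
when `g` is nonnegative and `g, h` monovary. -/
lemma cheb_aux {n : ℕ} (g h : Fin n → ℝ) (hg : ∀ i, 0 ≤ g i)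
    (hmono : ∀ i j, 0 ≤ (g j - g i) * (h j - h i)) :
    (∑ i, g i * g i) * (∑ j, g j * h j) ≤ (∑ i, g i) * (∑ j, g j * g j * h j) := by
  have key : 0 ≤ ∑ i : Fin n, ∑ j : Fin n, g i * g j * ((g j - g i) * (h j - h i)) := by
    refine Finset.sum_nonneg fun i _ => Finset.sum_nonneg fun j _ => ?_
    exact mul_nonneg (mul_nonneg (hg i) (hg j)) (hmono i j)
  have e1 : ∑ i : Fin n, ∑ j : Fin n, g i * g j * ((g j - g i) * (h j - h i))
      = ((∑ i, g i) * (∑ j, g j * g j * h j) + (∑ i, g i * g i * h i) * (∑ j, g j))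
        - ((∑ i, g i * g i) * (∑ j, g j * h j) + (∑ i, g i * h i) * (∑ j, g j * g j)) := by
    rw [Finset.sum_mul_sum, Finset.sum_mul_sum, Finset.sum_mul_sum, Finset.sum_mul_sum,
      ← Finset.sum_add_distrib, ← Finset.sum_add_distrib, ← Finset.sum_sub_distrib]
    refine Finset.sum_congr rfl fun i _ => ?_
    rw [← Finset.sum_add_distrib, ← Finset.sum_add_distrib, ← Finset.sum_sub_distrib]
    exact Finset.sum_congr rfl fun j _ => by ring
  have e2 : ∑ i, g i * h i * g i = ∑ i, g i * g i * h i := by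
    exact Finset.sum_congr rfl fun i _ => by ring
  rw [e1] at key
  nlinarith [key]

/-- Main inequality: for positive `a` and `t ≥ 1`,
`(∑ a²)(∑ aᵗ)² ≤ (∑ a^{2t})(∑ a)²`. -/
lemma main_aux {n : ℕ} (a : Fin n → ℝ) (ha : ∀ i, 0 < a i) (t : ℝ) (ht : 1 ≤ t) :
    (∑ i, a i ^ 2) * (∑ i, a i ^ t) ^ 2 ≤ (∑ i, (a i ^ t) ^ 2) * (∑ i, a i) ^ 2 := by
  have hpos : ∀ i, (0:ℝ) < a i := ha
  -- Cauchy-Schwarz: (∑ a^t)² ≤ (∑ a)(∑ a^(2t-1))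
  have hCS : (∑ i, a i ^ t) ^ 2 ≤ (∑ i, a i) * (∑ i, a i * a i ^ (2*t - 2)) := by
    have := Finset.sum_mul_sq_le_sq_mul_sq Finset.univ
      (fun i => a i ^ ((1:ℝ)/2)) (fun i => a i ^ (t - 1/2))
    have e : ∀ i : Fin n, a i ^ ((1:ℝ)/2) * a i ^ (t - 1/2) = a i ^ t := by
      intro i
      rw [← Real.rpow_add (hpos i)]; norm_num
    have e2 : ∀ i : Fin n, (a i ^ ((1:ℝ)/2)) ^ 2 = a i := by
      intro i
      rw [← Real.rpow_natCast (a i ^ ((1:ℝ)/2)) 2, ← Real.rpow_mul (hpos i).le]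
      norm_num
    have e3 : ∀ i : Fin n, (a i ^ (t - 1/2)) ^ 2 = a i * a i ^ (2*t - 2) := by
      intro i
      rw [← Real.rpow_natCast (a i ^ (t - 1/2)) 2, ← Real.rpow_mul (hpos i).le]
      nth_rewrite 2 [← Real.rpow_one (a i)]
      rw [← Real.rpow_add (hpos i)]
      congr 1
      push_cast
      ring
    simp only [e, e2, e3] at this
    exact this
  -- Chebyshev: (∑ a²)(∑ a · a^(2t-2)) ≤ (∑ a)(∑ a² · a^(2t-2))
  have hCh : (∑ i, a i * a i) * (∑ i, a i * a i ^ (2*t - 2))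
      ≤ (∑ i, a i) * (∑ i, a i * a i * a i ^ (2*t - 2)) := by
    refine cheb_aux a (fun i => a i ^ (2*t - 2)) (fun i => (hpos i).le) (fun i j => ?_)
    rcases le_total (a i) (a j) with hle | hle
    · exact mul_nonneg (by linarith) (by
        have := Real.rpow_le_rpow (hpos i).le hle (by linarith : (0:ℝ) ≤ 2*t - 2)
        linarith)
    · have := Real.rpow_le_rpow (hpos j).le hle (by linarith : (0:ℝ) ≤ 2*t - 2)
      nlinarith
  have eS2 : ∑ i, a i ^ 2 = ∑ i, a i * a i :=
    Finset.sum_congr rfl fun i _ => sq (a i) ▸ (sq (a i)).symm ▸ by ring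
  have eS2t : ∑ i, (a i ^ t) ^ 2 = ∑ i, a i * a i * a i ^ (2*t - 2) := by
    refine Finset.sum_congr rfl fun i _ => ?_
    rw [← Real.rpow_natCast (a i ^ t) 2, ← Real.rpow_mul (hpos i).le]
    nth_rewrite 2 [← Real.rpow_one (a i)]
    nth_rewrite 3 [← Real.rpow_one (a i)]
    rw [← Real.rpow_add (hpos i), ← Real.rpow_add (hpos i)]
    norm_num
    ring_nf
  have hS1 : 0 < ∑ i, a i ∨ True := Or.inr trivial
  have hS1nn : 0 ≤ ∑ i, a i := Finset.sum_nonneg fun i _ => (hpos i).le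
  have hSqnn : 0 ≤ ∑ i, a i ^ 2 := Finset.sum_nonneg fun i _ => sq_nonneg _
  calc (∑ i, a i ^ 2) * (∑ i, a i ^ t) ^ 2
      ≤ (∑ i, a i ^ 2) * ((∑ i, a i) * (∑ i, a i * a i ^ (2*t - 2))) :=
        mul_le_mul_of_nonneg_left hCS hSqnn
    _ = (∑ i, a i) * ((∑ i, a i * a i) * (∑ i, a i * a i ^ (2*t - 2))) := by rw [eS2]; ring
    _ ≤ (∑ i, a i) * ((∑ i, a i) * (∑ i, a i * a i * a i ^ (2*t - 2))) :=
        mul_le_mul_of_nonneg_left hCh hS1nn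
    _ = (∑ i, (a i ^ t) ^ 2) * (∑ i, a i) ^ 2 := by rw [eS2t]; ring

/-- tempering increases the effective sample size monotonically as the
exponent decreases: for `0 < γ₁ ≤ γ₂ ≤ 1`, the normalized tempered weights satisfy
`∑ᵢ (w̄ᵢ^{(γ₁)})² ≤ ∑ᵢ (w̄ᵢ^{(γ₂)})²`, i.e. `M_eff(γ₁) ≥ M_eff(γ₂)`. -/
theorem stmt14 (M : ℕ) (hM : 0 < M) (w : Fin M → ℝ) (hpos : ∀ i, 0 < w i)
    (γ₁ γ₂ : ℝ) (h1 : 0 < γ₁) (h12 : γ₁ ≤ γ₂) (h2 : γ₂ ≤ 1) :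
    (∑ i : Fin M, ((w i) ^ γ₁ / ∑ j : Fin M, (w j) ^ γ₁) ^ 2 ≤
      ∑ i : Fin M, ((w i) ^ γ₂ / ∑ j : Fin M, (w j) ^ γ₂) ^ 2) ∧
    (1 / ∑ i : Fin M, ((w i) ^ γ₂ / ∑ j : Fin M, (w j) ^ γ₂) ^ 2 ≤
      1 / ∑ i : Fin M, ((w i) ^ γ₁ / ∑ j : Fin M, (w j) ^ γ₁) ^ 2) := by
  set a : Fin M → ℝ := fun i => w i ^ γ₁ with ha_def
  have hapos : ∀ i, 0 < a i := fun i => Real.rpow_pos_of_pos (hpos i) _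
  set t : ℝ := γ₂ / γ₁ with ht_def
  have ht : 1 ≤ t := (one_le_div h1).mpr h12
  have hat : ∀ i, w i ^ γ₂ = a i ^ t := by
    intro i
    rw [ha_def]
    rw [← Real.rpow_mul (hpos i).le, ht_def]
    congr 1
    field_simp
  have e1 : ∀ i : Fin M, w i ^ γ₁ = a i := fun i => rfl
  have key : (∑ i : Fin M, a i ^ 2) / (∑ j : Fin M, a j) ^ 2
      ≤ (∑ i : Fin M, (a i ^ t) ^ 2) / (∑ j : Fin M, a j ^ t) ^ 2 := by
    have hS1 : 0 < ∑ j : Fin M, a j :=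
      Finset.sum_pos (fun j _ => hapos j) (Finset.univ_nonempty_iff.mpr ⟨⟨0, hM⟩⟩)
    have hSt : 0 < ∑ j : Fin M, a j ^ t :=
      Finset.sum_pos (fun j _ => Real.rpow_pos_of_pos (hapos j) _)
        (Finset.univ_nonempty_iff.mpr ⟨⟨0, hM⟩⟩)
    rw [div_le_div_iff₀ (by positivity) (by positivity)]
    exact main_aux a hapos t ht
  have eq1 : ∑ i : Fin M, ((w i) ^ γ₁ / ∑ j : Fin M, (w j) ^ γ₁) ^ 2
      = (∑ i : Fin M, a i ^ 2) / (∑ j : Fin M, a j) ^ 2 := by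
    simp only [div_pow, ← Finset.sum_div]
    rfl
  have eq2 : ∑ i : Fin M, ((w i) ^ γ₂ / ∑ j : Fin M, (w j) ^ γ₂) ^ 2
      = (∑ i : Fin M, (a i ^ t) ^ 2) / (∑ j : Fin M, a j ^ t) ^ 2 := by
    simp only [hat, div_pow, ← Finset.sum_div]
  have main : ∑ i : Fin M, ((w i) ^ γ₁ / ∑ j : Fin M, (w j) ^ γ₁) ^ 2
      ≤ ∑ i : Fin M, ((w i) ^ γ₂ / ∑ j : Fin M, (w j) ^ γ₂) ^ 2 := by
    rw [eq1, eq2]; exact key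
  refine ⟨main, ?_⟩
  have hpos1 : 0 < ∑ i : Fin M, ((w i) ^ γ₁ / ∑ j : Fin M, (w j) ^ γ₁) ^ 2 := by
    have hS1 : 0 < ∑ j : Fin M, a j :=
      Finset.sum_pos (fun j _ => hapos j) (Finset.univ_nonempty_iff.mpr ⟨⟨0, hM⟩⟩)
    refine Finset.sum_pos (fun i _ => ?_) (Finset.univ_nonempty_iff.mpr ⟨⟨0, hM⟩⟩)
    exact pow_pos (div_pos (hapos i) hS1) 2
  exact one_div_le_one_div_of_le hpos1 main
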